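/- Let θ : A → A^λ be a primitive substitution of constant length λ ≥ 2 over a finite alphabet A with θ(a₀)_0 = a₀ for some a₀ ∈ A. If the column number satisfies c(θ) = 1, then the height satisfies h(θ) = 1. -/

import Mathlib

open Filter Topology

/-- `substIter θ l k a j` is the `j`-th letter of `θ^k(a)`, where `θ : A → A^l` is a
substitution of constant length `l` (the letters of `θ(a)` being `θ a 0, …, θ a (l-1)`).
It is meaningful for `j < l ^ k` and satisfies
`θ^{k+1}(a)_{j'·l + r} = θ(θ^k(a)_{j'})_r`. -/
def substIter {A : Type*} (θ : A → ℕ → A) (l : ℕ) : ℕ → A → ℕ → A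
  | 0, a, _ => a
  | k + 1, a, j => θ (substIter θ l k a (j / l)) (j % l)

/-- A substitution of constant length `l` is primitive if some iterate of every letter
contains every letter. -/
def SubstPrimitive {A : Type*} (θ : A → ℕ → A) (l : ℕ) : Prop :=
  ∃ k, 1 ≤ k ∧ ∀ a b : A, ∃ j, j < l ^ k ∧ substIter θ l k a j = b

/-- Primitivity of a substitution restricted to a sub-alphabet `S`. -/
def SubstPrimitiveOn {A : Type*} (θ : A → ℕ → A) (l : ℕ) (S : Set A) : Prop :=
  ∃ k, 1 ≤ k ∧ ∀ a ∈ S, ∀ b ∈ S, ∃ j, j < l ^ k ∧ substIter θ l k a j = b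

/-- The column number of a substitution of constant length `l`, restricted to the
sub-alphabet `S`: the minimal cardinality of a column set `{θ^k(a)_j : a ∈ S}`. -/
noncomputable def columnNumberOn {A : Type*} (θ : A → ℕ → A) (l : ℕ) (S : Set A) : ℕ :=
  sInf { n : ℕ | ∃ k, 1 ≤ k ∧ ∃ j, j < l ^ k ∧
    ((fun a => substIter θ l k a j) '' S).ncard = n }

/-- The column number `c(θ)` of a substitution of constant length `l`. -/
noncomputable def columnNumber {A : Type*} (θ : A → ℕ → A) (l : ℕ) : ℕ :=
  columnNumberOn θ l Set.univ

/-- The one-sided fixed point `u` of `θ` obtained by iterating `θ` at a letter `a₀`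
with `θ(a₀)_0 = a₀`: `u n = θ^k(a₀)_n` for any `k` with `n < l^k`. -/
def substFixedPoint {A : Type*} (θ : A → ℕ → A) (l : ℕ) (a₀ : A) : ℕ → A :=
  fun n => substIter θ l (n + 1) a₀ n

/-- The height `h(θ)`: the largest `m ≥ 1` coprime to `l` dividing
`gcd {r ≥ 1 : u[r] = u[0]}`, i.e. dividing every return time of `u[0]`. -/
noncomputable def substHeight {A : Type*} (θ : A → ℕ → A) (l : ℕ) (a₀ : A) : ℕ :=
  sSup { m : ℕ | 1 ≤ m ∧ Nat.Coprime m l ∧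
    ∀ r : ℕ, 1 ≤ r → substFixedPoint θ l a₀ r = substFixedPoint θ l a₀ 0 → m ∣ r }

/-- The subshift `X_θ ⊆ A^ℤ`: all `x` each of whose finite blocks occurs in some
`θ^k(a)`. -/
def subshift {A : Type*} (θ : A → ℕ → A) (l : ℕ) : Set (ℤ → A) :=
  { x | ∀ (i : ℤ) (n : ℕ), ∃ k, 1 ≤ k ∧ ∃ a : A, ∃ j : ℕ, j + n ≤ l ^ k ∧
      ∀ m : ℕ, m < n → x (i + (m : ℤ)) = substIter θ l k a (j + m) }

/-- The subshift `X_x ⊆ A^ℤ` generated by a one-sided sequence `x ∈ A^ℕ`: all `z`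
each of whose finite blocks occurs in `x`. -/
def subshiftOf {A : Type*} (x : ℕ → A) : Set (ℤ → A) :=
  { z | ∀ (i : ℤ) (n : ℕ), ∃ j : ℕ, ∀ m : ℕ, m < n → z (i + (m : ℤ)) = x (j + m) }

/-- The left shift on `A^ℤ`. -/
def shift {A : Type*} (x : ℤ → A) : ℤ → A := fun n => x (n + 1)

/-- A bounded arithmetic function. -/
def BoundedSeq (u : ℕ → ℂ) : Prop := ∃ C : ℝ, ∀ n, ‖u n‖ ≤ C

/-- A multiplicative arithmetic function: `u(mn) = u(m)u(n)` for coprime `m, n`. -/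
def MultiplicativeSeq (u : ℕ → ℂ) : Prop :=
  ∀ m n : ℕ, Nat.Coprime m n → u (m * n) = u m * u n

/-- An aperiodic arithmetic function: zero mean along every arithmetic progression. -/
def AperiodicSeq (u : ℕ → ℂ) : Prop :=
  ∀ a b : ℕ, 1 ≤ a →
    Tendsto (fun N : ℕ => (N : ℂ)⁻¹ * ∑ n ∈ Finset.Icc 1 N, u (a * n + b)) atTop (nhds 0)

/-- The Weyl pseudo-metric
`d_W(x,y) = limsup_N sup_{ℓ ≥ 1} (1/N)·#{ℓ ≤ n < ℓ+N : x n ≠ y n}`. -/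
noncomputable def weylDist {B : Type*} (x y : ℕ → B) : ℝ :=
  limsup (fun N : ℕ =>
    ⨆ ℓ : ℕ, ⨆ _ : 1 ≤ ℓ,
      (({ n : ℕ | ℓ ≤ n ∧ n < ℓ + N ∧ x n ≠ y n }.ncard : ℝ) / N)) atTop

/-- A periodic sequence. -/
def IsPeriodicSeq {B : Type*} (v : ℕ → B) : Prop :=
  ∃ p, 1 ≤ p ∧ ∀ n, v (n + p) = v n

/-- Weyl rational almost periodicity: a `d_W`-limit of periodic sequences. -/
def WRAPSeq {B : Type*} (x : ℕ → B) : Prop :=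
  ∀ ε : ℝ, 0 < ε → ∃ v : ℕ → B, IsPeriodicSeq v ∧ weylDist x v < ε

/-- The family `𝒳(θ)` of column sets realizing the column number of `θ`. -/
noncomputable def columnSets {A : Type*} (θ : A → ℕ → A) (l : ℕ) : Set (Set A) :=
  { M | (∃ k, 1 ≤ k ∧ ∃ j, j < l ^ k ∧ M = (fun a => substIter θ l k a j) '' Set.univ) ∧
        M.ncard = columnNumber θ l }

/-- The synchronizing part `~θ` of `θ`, as a substitution on subsets of the alphabet:
`~θ(M)_j = {θ(a)_j : a ∈ M}`. -/
def synchPart {A : Type*} (θ : A → ℕ → A) : Set A → ℕ → Set A :=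
  fun M j => (fun a => θ a j) '' M

/-- The joining `θ ∨ ζ` of two substitutions of the same constant length. -/
def joinSub {A B : Type*} (θ : A → ℕ → A) (ζ : B → ℕ → B) : A × B → ℕ → A × B :=
  fun p j => (θ p.1 j, ζ p.2 j)

/-- The pure base `θ^{(h)}` of `θ`: a substitution of length `l` on blocks of length `h`,
`θ^{(h)}(w)_j = θ(w)[jh, (j+1)h−1]`, where `θ(w)` is the concatenation
`θ(w_0)…θ(w_{h-1})`. -/
def pureBase {A : Type*} (θ : A → ℕ → A) (l h : ℕ) : (Fin h → A) → ℕ → (Fin h → A) :=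
  fun w j i => θ (w ⟨(j * h + i.val) / l % h, Nat.mod_lt _ i.pos⟩) ((j * h + i.val) % l)

/-- Iterated cocycle `σ^{(k)}`, with `σ^{(1)} = σ` and
`σ^{(k+1)}(M, j₁·l + j₂) = σ^{(k)}(M, j₁) ∘ σ(~θ^k(M)_{j₁}, j₂)`. -/
def sigmaIter {X : Type*} {c : ℕ} (tilde : X → ℕ → X)
    (σ : X → ℕ → Equiv.Perm (Fin c)) (l : ℕ) : ℕ → X → ℕ → Equiv.Perm (Fin c)
  | 0, _, _ => 1
  | k + 1, M, j =>
      sigmaIter tilde σ l k M (j / l) * σ (substIter tilde l k M (j / l)) (j % l)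

/-- The group extension substitution `Θ̂(g, M)_j = (g ∘ σ(M,j), ~θ(M)_j)`. -/
def hatTheta {X : Type*} {c : ℕ} (tilde : X → ℕ → X)
    (σ : X → ℕ → Equiv.Perm (Fin c)) : Equiv.Perm (Fin c) × X → ℕ → Equiv.Perm (Fin c) × X :=
  fun p j => (p.1 * σ p.2 j, tilde p.2 j)

/-- The group `G` generated by the cocycle values `σ(M, j)`, `M ∈ 𝒳`, `j < l`. -/
def cocycleGroup {X : Type*} {c : ℕ} (σ : X → ℕ → Equiv.Perm (Fin c)) (l : ℕ) :
    Subgroup (Equiv.Perm (Fin c)) :=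
  Subgroup.closure { g | ∃ M : X, ∃ j, j < l ∧ g = σ M j }

section Aux
variable {A : Type*} (θ : A → ℕ → A) (l : ℕ)

lemma substIter_comp (hl : 0 < l) (k₁ k₂ : ℕ) (a : A) (j₂ j₁ : ℕ) (h : j₁ < l ^ k₁) :
    substIter θ l (k₁ + k₂) a (j₂ * l ^ k₁ + j₁) =
      substIter θ l k₁ (substIter θ l k₂ a j₂) j₁ := by
  induction k₁ generalizing j₁ with
  | zero =>
    have : j₁ = 0 := by simpa using h
    subst this
    simp [substIter]
  | succ k ih =>
    have hrw : j₂ * l ^ (k + 1) + j₁ = j₁ + l * (j₂ * l ^ k) := by ring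
    have hdiv : (j₂ * l ^ (k + 1) + j₁) / l = j₂ * l ^ k + j₁ / l := by
      rw [hrw, Nat.add_mul_div_left _ _ hl]; ring
    have hmod : (j₂ * l ^ (k + 1) + j₁) % l = j₁ % l := by
      rw [hrw, Nat.add_mul_mod_self_left]
    have hj : j₁ / l < l ^ k := by
      rw [Nat.div_lt_iff_lt_mul hl]
      calc j₁ < l ^ (k + 1) := h
      _ = l ^ k * l := by ring
    rw [show k + 1 + k₂ = (k + k₂) + 1 by ring]
    show θ (substIter θ l (k + k₂) a ((j₂ * l ^ (k + 1) + j₁) / l))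
        ((j₂ * l ^ (k + 1) + j₁) % l) = θ (substIter θ l k (substIter θ l k₂ a j₂) (j₁ / l)) (j₁ % l)
    rw [hdiv, hmod, ih _ hj]

variable {a₀ : A}

lemma substIter_zero (ha₀ : θ a₀ 0 = a₀) (k : ℕ) : substIter θ l k a₀ 0 = a₀ := by
  induction k with
  | zero => rfl
  | succ k ih =>
    show θ (substIter θ l k a₀ (0 / l)) (0 % l) = a₀
    simp [ih, ha₀]

lemma substIter_stable (ha₀ : θ a₀ 0 = a₀) (hl : 0 < l) (k k' n : ℕ) (h : n < l ^ k) :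
    substIter θ l (k + k') a₀ n = substIter θ l k a₀ n := by
  have := substIter_comp θ l hl k k' a₀ 0 n h
  simpa [substIter_zero θ l ha₀] using this

lemma fixedPoint_eq (ha₀ : θ a₀ 0 = a₀) (hl : 2 ≤ l) (k n : ℕ) (h : n < l ^ k) :
    substFixedPoint θ l a₀ n = substIter θ l k a₀ n := by
  have hl0 : 0 < l := by omega
  have hn : n < l ^ (n + 1) := by
    calc n < 2 ^ n := Nat.lt_two_pow_self
    _ ≤ l ^ n := Nat.pow_le_pow_left hl n
    _ ≤ l ^ (n + 1) := Nat.pow_le_pow_right hl0 (by omega)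
  set K := max (n + 1) k with hK
  have h1 : substIter θ l K a₀ n = substIter θ l (n + 1) a₀ n := by
    have : K = (n + 1) + (K - (n + 1)) := by omega
    rw [this, substIter_stable θ l ha₀ hl0 _ _ _ hn]
  have h2 : substIter θ l K a₀ n = substIter θ l k a₀ n := by
    have : K = k + (K - k) := by omega
    rw [this, substIter_stable θ l ha₀ hl0 _ _ _ h]
  rw [substFixedPoint, ← h1, h2]

end Aux

/-- A primitive substitution with column number `1` is pure:
its height is `1`. -/
theorem height_eq_one_of_column_eq_one
    {A : Type*} [Finite A] (l : ℕ) (hl : 2 ≤ l)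
    (θ : A → ℕ → A) (hθ : SubstPrimitive θ l)
    (a₀ : A) (ha₀ : θ a₀ 0 = a₀)
    (hc : columnNumber θ l = 1) :
    substHeight θ l a₀ = 1 := by
  have hl0 : 0 < l := by omega
  -- extract a coincidence column from columnNumber = 1
  have hne : { n : ℕ | ∃ k, 1 ≤ k ∧ ∃ j, j < l ^ k ∧
      ((fun a => substIter θ l k a j) '' Set.univ).ncard = n }.Nonempty := by
    by_contra h
    rw [Set.not_nonempty_iff_eq_empty] at h
    rw [columnNumber, columnNumberOn, h] at hc
    simp at hc
  have hmem := Nat.sInf_mem hne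
  rw [show sInf { n : ℕ | ∃ k, 1 ≤ k ∧ ∃ j, j < l ^ k ∧
      ((fun a => substIter θ l k a j) '' Set.univ).ncard = n } = columnNumber θ l from rfl,
    hc] at hmem
  obtain ⟨k, hk1, j, hj, hcard⟩ := hmem
  rw [Set.ncard_eq_one] at hcard
  obtain ⟨b, hb⟩ := hcard
  have hcoin : ∀ a : A, substIter θ l k a j = b := by
    intro a
    have : substIter θ l k a j ∈ (fun a => substIter θ l k a j) '' Set.univ :=
      ⟨a, Set.mem_univ a, rfl⟩
    rw [hb] at this
    exact this
  -- primitivity: a₀ occurs in θ^K(b)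
  obtain ⟨K, hK1, hprim⟩ := hθ
  obtain ⟨p, hp, hbp⟩ := hprim b a₀
  -- the fixed point equals a₀ along the progression q·l^(k+K) + (j·l^K + p)
  set r : ℕ := j * l ^ K + p with hr_def
  have hr : r < l ^ (k + K) := by
    calc r < j * l ^ K + l ^ K := by omega
    _ = (j + 1) * l ^ K := by ring
    _ ≤ l ^ k * l ^ K := Nat.mul_le_mul_right _ (by omega)
    _ = l ^ (k + K) := (pow_add l k K).symm
  have key : ∀ q : ℕ, substFixedPoint θ l a₀ (q * l ^ (k + K) + r) = a₀ := by
    intro q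
    have hqE : q < l ^ (q + 1) := by
      calc q < 2 ^ q := Nat.lt_two_pow_self
      _ ≤ l ^ q := Nat.pow_le_pow_left hl q
      _ ≤ l ^ (q + 1) := Nat.pow_le_pow_right hl0 (by omega)
    have hN : q * l ^ (k + K) + r < l ^ ((k + K) + (q + 1)) := by
      calc q * l ^ (k + K) + r < (q + 1) * l ^ (k + K) := by rw [add_mul, one_mul]; omega
      _ ≤ l ^ (q + 1) * l ^ (k + K) := Nat.mul_le_mul_right _ hqE
      _ = l ^ ((k + K) + (q + 1)) := by rw [← pow_add]; ring_nf
    rw [fixedPoint_eq θ l ha₀ hl _ _ hN,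
      substIter_comp θ l hl0 (k + K) (q + 1) a₀ q r hr]
    set a := substIter θ l (q + 1) a₀ q
    have : substIter θ l (k + K) a r = a₀ := by
      rw [hr_def, add_comm k K, substIter_comp θ l hl0 K k a j p hp, hcoin, hbp]
    exact this
  -- conclusion: the set defining the height is {1}
  have hS : { m : ℕ | 1 ≤ m ∧ Nat.Coprime m l ∧
      ∀ r : ℕ, 1 ≤ r → substFixedPoint θ l a₀ r = substFixedPoint θ l a₀ 0 → m ∣ r }
      = {1} := by
    have hu0 : substFixedPoint θ l a₀ 0 = a₀ := by
      show substIter θ l 1 a₀ 0 = a₀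
      exact substIter_zero θ l ha₀ 1
    ext m
    simp only [Set.mem_setOf_eq, Set.mem_singleton_iff]
    constructor
    · rintro ⟨hm1, hml, hmr⟩
      have hL : 1 ≤ l ^ (k + K) := Nat.one_le_pow _ _ hl0
      have h1 : m ∣ 1 * l ^ (k + K) + r := by
        apply hmr _ (by omega)
        rw [key 1, hu0]
      have h2 : m ∣ 2 * l ^ (k + K) + r := by
        apply hmr _ (by omega)
        rw [key 2, hu0]
      have hdvd : m ∣ l ^ (k + K) := by
        have := Nat.dvd_sub h2 h1
        have heq : 2 * l ^ (k + K) + r - (1 * l ^ (k + K) + r) = l ^ (k + K) := by omega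
        rwa [heq] at this
      exact (Nat.Coprime.pow_right _ hml).eq_one_of_dvd hdvd
    · rintro rfl
      exact ⟨le_refl 1, Nat.coprime_one_left l, fun r _ _ => one_dvd r⟩
  rw [substHeight, hS, csSup_singleton]
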